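/- Let {s_1, …, s_n} ⊂ S^{d-1} be an η-dense subset of the unit sphere with η ≤ 1/8, and let A ∈ R^{n×d} have rows a_1, …, a_n with ||a_i - s_i|| ≤ η for each i. Let b ∈ [1-η, 1+η]^n. Then (1-2η)·B^d ⊆ {x ∈ R^d : Ax ≤ b} ⊆ (1+4η)·B^d. -/

import Mathlib

/-- Smoothed dense constraints give a body close to the unit ball: if `{s₁,…,sₙ}` is an
`η`-dense subset of the unit sphere with `η ≤ 1/8`, the rows `aᵢ` of `A` satisfy
`‖aᵢ - sᵢ‖ ≤ η`, and `b ∈ [1-η, 1+η]ⁿ`, then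
`(1-2η)·B^d ⊆ {x : Ax ≤ b} ⊆ (1+4η)·B^d`. -/
theorem stmt_15 (d n : ℕ) (η : ℝ) (hη0 : 0 < η) (hη : η ≤ 1 / 8)
    (s : Fin n → EuclideanSpace ℝ (Fin d)) (hs : ∀ i, ‖s i‖ = 1)
    (hdense : ∀ x : EuclideanSpace ℝ (Fin d), ‖x‖ = 1 → ∃ i, ‖x - s i‖ ≤ η)
    (a : Fin n → EuclideanSpace ℝ (Fin d)) (ha : ∀ i, ‖a i - s i‖ ≤ η)
    (b : Fin n → ℝ) (hb : ∀ i, b i ∈ Set.Icc (1 - η) (1 + η)) :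
    Metric.closedBall (0 : EuclideanSpace ℝ (Fin d)) (1 - 2 * η) ⊆
        {x : EuclideanSpace ℝ (Fin d) | ∀ i, (inner ℝ (a i) x : ℝ) ≤ b i} ∧
      {x : EuclideanSpace ℝ (Fin d) | ∀ i, (inner ℝ (a i) x : ℝ) ≤ b i} ⊆
        Metric.closedBall (0 : EuclideanSpace ℝ (Fin d)) (1 + 4 * η) := by
  constructor
  · intro x hx
    simp only [Metric.mem_closedBall, dist_zero_right] at hx
    intro i
    have hai : ‖a i‖ ≤ 1 + η := by
      have := norm_sub_norm_le (a i) (s i)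
      have := ha i; have := hs i; linarith
    have h1 : (inner ℝ (a i) x : ℝ) ≤ ‖a i‖ * ‖x‖ := real_inner_le_norm _ _
    have hxn : (0:ℝ) ≤ ‖x‖ := norm_nonneg _
    have hbn := (hb i).1
    nlinarith [norm_nonneg (a i)]
  · intro x hx
    simp only [Set.mem_setOf_eq] at hx
    simp only [Metric.mem_closedBall, dist_zero_right]
    by_cases h0 : x = 0
    · simp [h0]; nlinarith
    · have hxn : 0 < ‖x‖ := norm_pos_iff.mpr h0
      set u := (‖x‖⁻¹ : ℝ) • x with hudef
      have hu : ‖u‖ = 1 := by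
        rw [hudef, norm_smul, Real.norm_eq_abs, abs_of_pos (inv_pos.mpr hxn),
          inv_mul_cancel₀ hxn.ne']
      obtain ⟨i, hi⟩ := hdense u hu
      have hsq : ‖u - s i‖ ^ 2 ≤ η ^ 2 := by
        have := norm_nonneg (u - s i)
        nlinarith
      have hexp : ‖u - s i‖ ^ 2 = ‖u‖ ^ 2 - 2 * inner ℝ u (s i) + ‖s i‖ ^ 2 :=
        norm_sub_sq_real u (s i)
      have hsu : (1 : ℝ) - η^2/2 ≤ (inner ℝ (s i) u : ℝ) := by
        rw [real_inner_comm]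
        rw [hu, hs i] at hexp
        nlinarith
      have hsx : (inner ℝ (s i) x : ℝ) = ‖x‖ * (inner ℝ (s i) u : ℝ) := by
        rw [hudef, real_inner_smul_right]
        field_simp
      have hdiff : -(η * ‖x‖) ≤ (inner ℝ (a i - s i) x : ℝ) := by
        have h1 : |(inner ℝ (a i - s i) x : ℝ)| ≤ ‖a i - s i‖ * ‖x‖ :=
          abs_real_inner_le_norm _ _
        have h2 : ‖a i - s i‖ * ‖x‖ ≤ η * ‖x‖ :=
          mul_le_mul_of_nonneg_right (ha i) (norm_nonneg x)
        have := abs_le.mp h1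
        linarith [this.1]
      have hsplit : (inner ℝ (a i) x : ℝ) = inner ℝ (s i) x + inner ℝ (a i - s i) x := by
        rw [inner_sub_left]; ring
      have hbi := hx i
      have hb2 := (hb i).2
      have key : ‖x‖ * (1 - η - η^2/2) ≤ 1 + η := by
        have h3 : ‖x‖ * (1 - η^2/2) ≤ (inner ℝ (s i) x : ℝ) := by
          rw [hsx]
          exact mul_le_mul_of_nonneg_left hsu hxn.le
        nlinarith
      have hpos : (0:ℝ) < 1 - η - η^2/2 := by nlinarith
      have h5 : 1 + η ≤ (1 + 4*η) * (1 - η - η^2/2) := by nlinarith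
      exact le_of_mul_le_mul_right (key.trans h5) hpos
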